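/- For all natural numbers n ≥ 1 and k, the number of simple graphs G on the labeled vertex set Fin n with the property that every vertex i has at most k neighbors j with j > i (well-ordered graphs) equals the product over r = 1, …, n−1 of Σ_{i=0}^{min(r,k)} C(r,i), where C(r,i) is the binomial coefficient. -/

import Mathlib

open Finset

lemma count_subsets {α : Type*} [Fintype α] [DecidableEq α] (A : Finset α) (k : ℕ) :
    Nat.card {s : Finset α // s ⊆ A ∧ s.card ≤ k} =
      ∑ t ∈ Finset.range (k + 1), A.card.choose t := by
  rw [Nat.card_eq_fintype_card, Fintype.card_subtype]
  have h1 : (univ.filter fun s : Finset α => s ⊆ A ∧ s.card ≤ k) =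
      (Finset.range (k + 1)).biUnion (fun t => A.powersetCard t) := by
    ext s
    simp [Finset.mem_powersetCard, Nat.lt_succ_iff]
    tauto
  rw [h1, Finset.card_biUnion]
  · exact Finset.sum_congr rfl fun t _ => Finset.card_powersetCard t A
  · intro x _ y _ hxy
    simp only [Finset.disjoint_left, Finset.mem_powersetCard]
    rintro s ⟨-, h1⟩ ⟨-, h2⟩
    exact hxy (h1 ▸ h2 ▸ rfl)



/-- A simple graph `G` on `Fin n` is well-ordered with parameter `k` if every vertex
`i` has at most `k` neighbors `j` with `j > i` in the natural order of `Fin n`. -/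
def IsWellOrdered {n : ℕ} (k : ℕ) (G : SimpleGraph (Fin n)) : Prop :=
  ∀ i : Fin n, {j : Fin n | G.Adj i j ∧ i < j}.ncard ≤ k

/-- The number of well-ordered graphs with parameter `k` on the labeled vertex set
`Fin n` equals `∏_{r=1}^{n-1} Σ_{i=0}^{min(r,k)} C(r,i)`. -/
theorem card_wellOrdered (n k : ℕ) (hn : 1 ≤ n) :
    Nat.card {G : SimpleGraph (Fin n) // IsWellOrdered k G} =
      ∏ r ∈ Finset.Icc 1 (n - 1), ∑ i ∈ Finset.range (min r k + 1), r.choose i := by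
  classical
  -- key fact relating the set and the finset
  have key : ∀ (G : SimpleGraph (Fin n)) (i : Fin n),
      {j : Fin n | G.Adj i j ∧ i < j}.ncard = ((Finset.Ioi i).filter (G.Adj i)).card := by
    intro G i
    rw [Set.ncard_eq_toFinset_card']
    congr 1
    ext j
    simp [Finset.mem_Ioi, and_comm]
  have E : {G : SimpleGraph (Fin n) // IsWellOrdered k G} ≃
      ∀ i : Fin n, {s : Finset (Fin n) // s ⊆ Finset.Ioi i ∧ s.card ≤ k} := by
    refine
      { toFun := fun G i => ⟨(Finset.Ioi i).filter (G.1.Adj i),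
          Finset.filter_subset _ _, by rw [← key G.1 i]; exact G.2 i⟩
        invFun := fun f =>
          ⟨{ Adj := fun i j => j ∈ (f i).1 ∨ i ∈ (f j).1
             symm := ⟨fun i j h => Or.symm h⟩
             loopless := ⟨fun i h => by
               rcases h with h | h <;>
               exact absurd ((f i).2.1 h) (by simp)⟩ },
            ?_⟩
        left_inv := ?_
        right_inv := ?_ }
    · intro i
      have hs : {j : Fin n | (j ∈ (f i).1 ∨ i ∈ (f j).1) ∧ i < j} = ↑(f i).1 := by
        ext j
        simp only [Set.mem_setOf_eq, Finset.coe_mem, Finset.mem_coe]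
        constructor
        · rintro ⟨hj | hj, hij⟩
          · exact hj
          · exact absurd (Finset.mem_Ioi.mp ((f j).2.1 hj)) (asymm hij)
        · intro hj
          exact ⟨Or.inl hj, Finset.mem_Ioi.mp ((f i).2.1 hj)⟩
      show {j : Fin n | (j ∈ (f i).1 ∨ i ∈ (f j).1) ∧ i < j}.ncard ≤ k
      rw [hs, Set.ncard_coe_finset]
      exact (f i).2.2
    · rintro ⟨G, hG⟩
      ext i j
      simp only [Finset.mem_filter, Finset.mem_Ioi]
      constructor
      · rintro (⟨h1, h2⟩ | ⟨h1, h2⟩)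
        · exact h2
        · exact h2.symm
      · intro h
        rcases lt_or_gt_of_ne (G.ne_of_adj h) with hij | hij
        · exact Or.inl ⟨hij, h⟩
        · exact Or.inr ⟨hij, h.symm⟩
    · intro f
      funext i
      apply Subtype.ext
      ext j
      simp only [Finset.mem_filter, Finset.mem_Ioi]
      constructor
      · rintro ⟨hij, hj | hj⟩
        · exact hj
        · exact absurd (Finset.mem_Ioi.mp ((f j).2.1 hj)) (asymm hij)
      · intro hj
        exact ⟨Finset.mem_Ioi.mp ((f i).2.1 hj), Or.inl hj⟩
  rw [Nat.card_congr E, Nat.card_pi]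
  have step : ∀ i : Fin n,
      Nat.card {s : Finset (Fin n) // s ⊆ Finset.Ioi i ∧ s.card ≤ k} =
        ∑ t ∈ Finset.range (k + 1), (n - 1 - (i : ℕ)).choose t := by
    intro i
    rw [count_subsets, Fin.card_Ioi]
  simp_rw [step]
  -- now reindex the product
  have hsum : ∀ r : ℕ, ∑ t ∈ Finset.range (k + 1), r.choose t =
      ∑ t ∈ Finset.range (min r k + 1), r.choose t := by
    intro r
    rw [eq_comm]
    apply Finset.sum_subset
    · intro x hx
      simp only [Finset.mem_range] at *
      omega
    · intro x hx hx'
      simp only [Finset.mem_range] at *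
      exact Nat.choose_eq_zero_of_lt (by omega)
  calc ∏ i : Fin n, ∑ t ∈ Finset.range (k + 1), (n - 1 - (i : ℕ)).choose t
      = ∏ r ∈ Finset.range n, ∑ t ∈ Finset.range (k + 1), (n - 1 - r).choose t := by
        exact Fin.prod_univ_eq_prod_range
          (fun r => ∑ t ∈ Finset.range (k + 1), (n - 1 - r).choose t) n
    _ = ∏ r ∈ Finset.range n, ∑ t ∈ Finset.range (k + 1), r.choose t :=
        Finset.prod_range_reflect (fun r => ∑ t ∈ Finset.range (k + 1), r.choose t) n
    _ = ∏ r ∈ Finset.range n, ∑ t ∈ Finset.range (min r k + 1), r.choose t := by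
        exact Finset.prod_congr rfl fun r _ => hsum r
    _ = ∏ r ∈ Finset.Icc 1 (n - 1), ∑ t ∈ Finset.range (min r k + 1), r.choose t := by
        have hr : Finset.range n = insert 0 (Finset.Icc 1 (n - 1)) := by
          ext x; simp [Finset.mem_Icc]; omega
        rw [hr, Finset.prod_insert (by simp)]
        simp
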